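/- Let n ≥ 2, let W ⊆ ℂ^{n+2} be a 4-dimensional conjugation-stable complex subspace on which B is nondegenerate and such that W ∩ ℝ^{n+1,1} has signature (3,1), and let T ∈ O(ℂ^{n+2}) be such that TW is also conjugation-stable. Write C for the conjugation v ↦ v̄ and T̄ := C ∘ T ∘ C. Then T^{-1} ∘ T̄ is a ℂ-linear automorphism of ℂ^{n+2} mapping W to itself, and (TW) ∩ ℝ^{n+1,1} has signature (3,1) if and only if det((T^{-1} ∘ T̄)|_W) = 1. -/

import Mathlib

noncomputable section

open Module

/-- The complexification `ℂ^{n+2}` of `ℝ^{n+1,1}`. -/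
abbrev Cn (n : ℕ) := Fin (n + 2) → ℂ

/-- The complex-bilinear extension `B` of the signature `(n+1,1)` inner product on
`ℝ^{n+1,1}`. -/
def Bf (n : ℕ) (v w : Cn n) : ℂ :=
  ∑ i : Fin (n + 2), (if (i : ℕ) < n + 1 then 1 else -1) * v i * w i

lemma Bf_add_left {n : ℕ} (v v' w : Cn n) :
    Bf n (v + v') w = Bf n v w + Bf n v' w := by
  simp only [Bf, Pi.add_apply, ← Finset.sum_add_distrib]
  exact Finset.sum_congr rfl fun i _ => by ring

lemma Bf_smul_left {n : ℕ} (c : ℂ) (v w : Cn n) :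
    Bf n (c • v) w = c * Bf n v w := by
  simp only [Bf, Pi.smul_apply, smul_eq_mul, Finset.mul_sum]
  exact Finset.sum_congr rfl fun i _ => by ring

lemma Bf_zero_left {n : ℕ} (w : Cn n) : Bf n 0 w = 0 := by
  simp [Bf]

/-- Complex conjugation on `ℂ^{n+2}`, as a `conj`-semilinear automorphism;
its fixed point set is `ℝ^{n+1,1}`. -/
def conjSL (n : ℕ) : Cn n →ₛₗ[starRingEnd ℂ] Cn n where
  toFun v := fun i => starRingEnd ℂ (v i)
  map_add' a b := by funext i; simp
  map_smul' c v := by funext i; simp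

instance : RingHomSurjective (starRingEnd ℂ) :=
  ⟨fun x => ⟨starRingEnd ℂ x, by simp⟩⟩

/-- The conjugate `Ū` of a complex subspace `U` of `ℂ^{n+2}`. -/
def conjSub {n : ℕ} (U : Submodule ℂ (Cn n)) : Submodule ℂ (Cn n) :=
  U.map (conjSL n)

/-- The real points `ℝ^{n+1,1}` inside `ℂ^{n+2}`, as a real subspace. -/
def realSub (n : ℕ) : Submodule ℝ (Cn n) where
  carrier := {v | ∀ i, starRingEnd ℂ (v i) = v i}
  add_mem' := by
    intro a b ha hb i
    simp only [Pi.add_apply, map_add, ha i, hb i]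
  zero_mem' := by intro i; simp
  smul_mem' := by
    intro c v hv i
    simp only [Pi.smul_apply, Complex.real_smul, map_mul, Complex.conj_ofReal, hv i]

/-- The real points `W ∩ ℝ^{n+1,1}` of a complex subspace `W ⊆ ℂ^{n+2}`. -/
def realPoints {n : ℕ} (W : Submodule ℂ (Cn n)) : Submodule ℝ (Cn n) :=
  (W.restrictScalars ℝ) ⊓ realSub n

/-- The Gram matrix `diag(1,1,1,-1)`. -/
def gram31 (i j : Fin 4) : ℂ :=
  if i = j then (if (i : ℕ) < 3 then 1 else -1) else 0

/-- A real subspace `P` of `ℂ^{n+2}` has signature `(3,1)` if it admits a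
basis whose Gram matrix with respect to `B` is `diag(1,1,1,-1)`. -/
def hasSig31 (n : ℕ) (P : Submodule ℝ (Cn n)) : Prop :=
  ∃ b : Fin 4 → Cn n, (∀ i, b i ∈ P) ∧
    Submodule.span ℝ (Set.range b) = P ∧
    ∀ i j, Bf n (b i) (b j) = gram31 i j

/-- The orthogonal complement of a subspace with respect to `B`. -/
def perp (n : ℕ) (V : Submodule ℂ (Cn n)) : Submodule ℂ (Cn n) where
  carrier := {v | ∀ w ∈ V, Bf n v w = 0}
  add_mem' := by
    intro a b ha hb w hw
    rw [Bf_add_left, ha w hw, hb w hw, add_zero]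
  zero_mem' := by
    intro w hw
    exact Bf_zero_left w
  smul_mem' := by
    intro c v hv w hw
    rw [Bf_smul_left, hv w hw, mul_zero]

/-- `ρ` is the reflection across `V`: the identity on `V` and minus the identity
on `V^⊥`. -/
def IsReflection (n : ℕ) (V : Submodule ℂ (Cn n)) (ρ : Cn n →ₗ[ℂ] Cn n) : Prop :=
  (∀ v ∈ V, ρ v = v) ∧ (∀ v ∈ perp n V, ρ v = -v)

/-- The automorphism `Γ^{ℓ⁺}_{ℓ⁻}(λ)`, where `ℓ⁺, ℓ⁻` are the complementary null
lines spanned by `u` and `w`: it is multiplication by `λ` on `ℓ⁺`, by `λ⁻¹` on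
`ℓ⁻` and the identity on `(ℓ⁺ ⊕ ℓ⁻)^⊥`. -/
def GammaL (n : ℕ) (u w : Cn n) (lam : ℂ) : Cn n →ₗ[ℂ] Cn n where
  toFun v := v + ((lam - 1) * (Bf n v w / Bf n u w)) • u
      + ((lam⁻¹ - 1) * (Bf n v u / Bf n u w)) • w
  map_add' a b := by
    simp only [Bf_add_left]
    module
  map_smul' c v := by
    simp only [Bf_smul_left, RingHom.id_apply]
    module

/-- `λ ↦ λ* = 1/λ̄`. -/
def cstar (z : ℂ) : ℂ := (starRingEnd ℂ z)⁻¹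

/-- The linear fractional transformation appearing in the simple factor
`p^V_{α,L}`. -/
def psi (α lam : ℂ) : ℂ := (1 + α) * (lam - α) / ((1 - α) * (lam + α))

/-- The simple factor `p^V_{α,L}(λ) = Γ^L_{ρ_V L}((1+α)(λ-α)/((1-α)(λ+α)))`,
where `ρ` is the reflection across `V` and `ℓ` spans the null line `L`. -/
def pSF (n : ℕ) (ρ : Cn n →ₗ[ℂ] Cn n) (ℓ : Cn n) (α lam : ℂ) : Cn n →ₗ[ℂ] Cn n :=
  GammaL n ℓ (ρ ℓ) (psi α lam)

/-- The value `p^V_{α,L}(∞) = Γ^L_{ρ_V L}((1+α)/(1-α))`. -/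
def pSFinf (n : ℕ) (ρ : Cn n →ₗ[ℂ] Cn n) (ℓ : Cn n) (α : ℂ) : Cn n →ₗ[ℂ] Cn n :=
  GammaL n ℓ (ρ ℓ) ((1 + α) / (1 - α))

/-- `T̄ = C ∘ T ∘ C`, the conjugate of a `ℂ`-linear map of `ℂ^{n+2}`. -/
def barMap {n : ℕ} (T : Cn n →ₗ[ℂ] Cn n) : Cn n →ₗ[ℂ] Cn n where
  toFun v := conjSL n (T (conjSL n v))
  map_add' a b := by simp
  map_smul' c v := by
    simp only [map_smulₛₗ, map_smul, RingHom.id_apply, RingHomCompTriple.comp_apply]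

/-! ### Auxiliary lemmas -/

section Aux

open Submodule

variable {n : ℕ}

lemma Bf_comm (v w : Cn n) : Bf n v w = Bf n w v := by
  unfold Bf; exact Finset.sum_congr rfl fun i _ => by ring

/-- `Bf` as a bilinear map. -/
def BfL (n : ℕ) : Cn n →ₗ[ℂ] Cn n →ₗ[ℂ] ℂ :=
  LinearMap.mk₂ ℂ (Bf n) Bf_add_left Bf_smul_left
    (fun v w w' => by rw [Bf_comm, Bf_add_left, Bf_comm w v, Bf_comm w' v])
    (fun c v w => by rw [smul_eq_mul, Bf_comm, Bf_smul_left, Bf_comm w v])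

@[simp] lemma BfL_apply (v w : Cn n) : BfL n v w = Bf n v w := rfl

@[simp] lemma conjSL_apply (v : Cn n) (i : Fin (n + 2)) :
    conjSL n v i = starRingEnd ℂ (v i) := rfl

@[simp] lemma conjSL_conjSL (v : Cn n) : conjSL n (conjSL n v) = v := by
  funext i; simp

lemma Bf_conj (v w : Cn n) :
    Bf n (conjSL n v) (conjSL n w) = starRingEnd ℂ (Bf n v w) := by
  unfold Bf
  rw [map_sum]
  refine Finset.sum_congr rfl fun i _ => ?_
  simp only [conjSL_apply, map_mul, apply_ite (starRingEnd ℂ), map_one, map_neg]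

lemma Bf_sum_left {ι : Type*} (s : Finset ι) (f : ι → Cn n) (w : Cn n) :
    Bf n (∑ i ∈ s, f i) w = ∑ i ∈ s, Bf n (f i) w := by
  have h := LinearMap.congr_fun (map_sum (BfL n) f s) w
  simpa only [BfL_apply, LinearMap.coe_sum, Finset.sum_apply] using h

lemma Bf_sum_right {ι : Type*} (s : Finset ι) (f : ι → Cn n) (w : Cn n) :
    Bf n w (∑ i ∈ s, f i) = ∑ i ∈ s, Bf n w (f i) := by
  rw [Bf_comm, Bf_sum_left]
  exact Finset.sum_congr rfl fun i _ => Bf_comm _ _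

lemma Bf_smul_right (c : ℂ) (v w : Cn n) : Bf n v (c • w) = c * Bf n v w := by
  rw [Bf_comm, Bf_smul_left, Bf_comm]

lemma mem_realSub_iff {x : Cn n} : x ∈ realSub n ↔ ∀ i, starRingEnd ℂ (x i) = x i :=
  Iff.rfl

lemma conjSL_eq_self {x : Cn n} (hx : x ∈ realSub n) : conjSL n x = x := funext hx

lemma Bf_real_entries {x y : Cn n} (hx : x ∈ realSub n) (hy : y ∈ realSub n) :
    ((Bf n x y).re : ℂ) = Bf n x y := by
  have : starRingEnd ℂ (Bf n x y) = Bf n x y := by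
    rw [← Bf_conj, conjSL_eq_self hx, conjSL_eq_self hy]
  exact Complex.conj_eq_iff_re.mp this

lemma Bf_self_real_formula {x : Cn n} (hx : x ∈ realSub n) :
    Bf n x x =
      ((∑ i : Fin (n + 2), (if (i : ℕ) < n + 1 then 1 else -1) * (x i).re ^ 2 : ℝ) : ℂ) := by
  unfold Bf
  rw [Complex.ofReal_sum]
  refine Finset.sum_congr rfl fun i _ => ?_
  obtain ⟨r, hr⟩ : ∃ r : ℝ, x i = (r : ℂ) :=
    ⟨(x i).re, (Complex.conj_eq_iff_re.mp (hx i)).symm⟩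
  rw [hr, Complex.ofReal_re]
  split_ifs <;> push_cast <;> ring

lemma conj_mem_of_conjSub_eq {U : Submodule ℂ (Cn n)} (hU : conjSub U = U) {x : Cn n}
    (hx : x ∈ U) : conjSL n x ∈ U := by
  rw [← hU]
  exact Submodule.mem_map_of_mem hx

lemma mem_realPoints_iff {U : Submodule ℂ (Cn n)} {x : Cn n} :
    x ∈ realPoints U ↔ x ∈ U ∧ x ∈ realSub n := Iff.rfl

lemma exists_real_decomp {U : Submodule ℂ (Cn n)} (hU : conjSub U = U) {w : Cn n}
    (hw : w ∈ U) :
    ∃ a b : Cn n, a ∈ realPoints U ∧ b ∈ realPoints U ∧ w = a + Complex.I • b := by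
  have hcw : conjSL n w ∈ U := conj_mem_of_conjSub_eq hU hw
  refine ⟨(1/2 : ℂ) • (w + conjSL n w), (-(Complex.I)/2) • (w - conjSL n w),
    ⟨U.smul_mem _ (U.add_mem hw hcw), ?_⟩, ⟨U.smul_mem _ (U.sub_mem hw hcw), ?_⟩, ?_⟩
  · intro i
    simp only [Pi.smul_apply, Pi.add_apply, conjSL_apply, smul_eq_mul, map_mul, map_add,
      Complex.conj_conj, map_div₀, map_one, map_ofNat]
    ring
  · intro i
    simp only [Pi.smul_apply, Pi.sub_apply, conjSL_apply, smul_eq_mul, map_mul, map_sub,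
      Complex.conj_conj, map_div₀, map_neg, Complex.conj_I, map_ofNat]
    ring
  · funext i
    simp only [Pi.add_apply, Pi.sub_apply, Pi.smul_apply, smul_eq_mul]
    have hI : Complex.I * Complex.I = -1 := Complex.I_mul_I
    linear_combination ((w i - conjSL n w i) / 2) * hI

lemma spanC_realPoints {U : Submodule ℂ (Cn n)} (hU : conjSub U = U) :
    Submodule.span ℂ ((realPoints U : Set (Cn n))) = U := by
  apply le_antisymm
  · rw [Submodule.span_le]
    exact fun x hx => hx.1
  · intro w hw
    obtain ⟨a, b, ha, hb, rfl⟩ := exists_real_decomp hU hw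
    exact Submodule.add_mem _ (Submodule.subset_span ha)
      (Submodule.smul_mem _ _ (Submodule.subset_span hb))

lemma ortho_indep {m : ℕ} (v : Fin m → Cn n) (d : Fin m → ℂ) (hd : ∀ i, d i ≠ 0)
    (hG : ∀ i j, Bf n (v i) (v j) = if i = j then d i else 0) :
    LinearIndependent ℂ v := by
  rw [Fintype.linearIndependent_iff]
  intro g hg j
  have h0 : Bf n (∑ i, g i • v i) (v j) = 0 := by rw [hg, Bf_zero_left]
  rw [Bf_sum_left] at h0
  have h1 : ∀ i, Bf n (g i • v i) (v j) = if i = j then g i * d i else 0 := by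
    intro i
    rw [Bf_smul_left, hG]
    split_ifs <;> simp
  rw [Finset.sum_congr rfl (fun i _ => h1 i), Finset.sum_ite_eq' Finset.univ j
    (fun i => g i * d i)] at h0
  simp only [Finset.mem_univ, if_true] at h0
  rcases mul_eq_zero.mp h0 with h | h
  · exact h
  · exact absurd h (hd j)

lemma span_eq_of_finrank {U : Submodule ℂ (Cn n)} (v : Fin 4 → Cn n)
    (hv : ∀ i, v i ∈ U) (hind : LinearIndependent ℂ v) (hU : Module.finrank ℂ U = 4) :
    Submodule.span ℂ (Set.range v) = U := by
  refine Submodule.eq_of_le_of_finrank_le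
    (Submodule.span_le.mpr (Set.range_subset_iff.mpr hv)) ?_
  rw [finrank_span_eq_card hind, hU, Fintype.card_fin]

/-- Build a basis of a 4-dimensional submodule from four suitable vectors. -/
def basisOfSpan {U : Submodule ℂ (Cn n)} (v : Fin 4 → Cn n) (hv : ∀ i, v i ∈ U)
    (hind : LinearIndependent ℂ v) (hspan : Submodule.span ℂ (Set.range v) = U) :
    Basis (Fin 4) ℂ U := by
  refine Basis.mk (v := fun i => (⟨v i, hv i⟩ : U))
    (LinearIndependent.of_comp U.subtype (by exact hind)) ?_
  have hinj := Submodule.map_injective_of_injective U.injective_subtype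
  have hmap : Submodule.map U.subtype
      (Submodule.span ℂ (Set.range fun i => (⟨v i, hv i⟩ : U))) =
      Submodule.map U.subtype ⊤ := by
    rw [Submodule.map_span, Submodule.map_top, Submodule.range_subtype,
      ← Set.range_comp]
    exact hspan
  rw [hinj hmap]

@[simp] lemma basisOfSpan_apply {U : Submodule ℂ (Cn n)} (v : Fin 4 → Cn n)
    (hv : ∀ i, v i ∈ U) (hind : LinearIndependent ℂ v)
    (hspan : Submodule.span ℂ (Set.range v) = U) (i : Fin 4) :
    (basisOfSpan v hv hind hspan i : Cn n) = v i := by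
  simp [basisOfSpan]

lemma Bf_sub_left (v v' w : Cn n) : Bf n (v - v') w = Bf n v w - Bf n v' w := by
  have h := LinearMap.congr_fun (map_sub (BfL n) v v') w
  simpa only [BfL_apply, LinearMap.sub_apply] using h

lemma Bf_sub_right (v w w' : Cn n) : Bf n v (w - w') = Bf n v w - Bf n v w' := by
  rw [Bf_comm, Bf_sub_left, Bf_comm w v, Bf_comm w' v]

lemma Bf_add_right (v w w' : Cn n) : Bf n v (w + w') = Bf n v w + Bf n v w' := by
  rw [Bf_comm, Bf_add_left, Bf_comm w v, Bf_comm w' v]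

lemma realSmul_eq (r : ℝ) (v : Cn n) : r • v = ((r : ℂ)) • v := by
  funext i
  simp [Complex.real_smul]

lemma Bf_nonneg_of_last_zero {x : Cn n} (hx : x ∈ realSub n)
    (hlast : x ⟨n + 1, by omega⟩ = 0) : ∃ r : ℝ, 0 ≤ r ∧ Bf n x x = (r : ℂ) := by
  refine ⟨_, ?_, Bf_self_real_formula hx⟩
  refine Finset.sum_nonneg fun i _ => ?_
  by_cases hi : (i : ℕ) < n + 1
  · rw [if_pos hi]; positivity
  · have hi' : i = ⟨n + 1, by omega⟩ := by
      apply Fin.ext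
      have := i.isLt
      simp only []
      omega
    rw [if_neg hi, hi', hlast]
    norm_num

lemma neg_neg_ortho_false {x y : Cn n} (hx : x ∈ realSub n) (hy : y ∈ realSub n)
    (hxx : Bf n x x = -1) (hyy : Bf n y y = -1) (hxy : Bf n x y = 0) : False := by
  set l : Fin (n + 2) := ⟨n + 1, by omega⟩ with hl
  set a : ℝ := (y l).re with ha_def
  set c : ℝ := (x l).re with hc_def
  have hxl : x l = (c : ℂ) := (Complex.conj_eq_iff_re.mp (hx l)).symm
  have hyl : y l = (a : ℂ) := (Complex.conj_eq_iff_re.mp (hy l)).symm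
  set u : Cn n := (a : ℂ) • x - (c : ℂ) • y with hu_def
  have hu_real : u ∈ realSub n := by
    intro i
    simp only [hu_def, Pi.sub_apply, Pi.smul_apply, smul_eq_mul, map_sub, map_mul,
      Complex.conj_ofReal, hx i, hy i]
  have hul : u l = 0 := by
    simp only [hu_def, Pi.sub_apply, Pi.smul_apply, smul_eq_mul, hxl, hyl]
    ring
  have h1 : Bf n u u = (a : ℂ) ^ 2 * Bf n x x - (a : ℂ) * (c : ℂ) * Bf n x y
      - (c : ℂ) * (a : ℂ) * Bf n y x + (c : ℂ) ^ 2 * Bf n y y := by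
    simp only [hu_def, Bf_sub_left, Bf_sub_right, Bf_smul_left, Bf_smul_right]
    ring
  rw [hxx, hyy, hxy, Bf_comm y x, hxy] at h1
  have hBuu : Bf n u u = ((-(a ^ 2 + c ^ 2) : ℝ) : ℂ) := by
    rw [h1]; push_cast; ring
  obtain ⟨r, hr0, hru⟩ := Bf_nonneg_of_last_zero hu_real hul
  have hrr : -(a ^ 2 + c ^ 2) = r := by
    have := hBuu.symm.trans hru
    exact_mod_cast this
  have hc0 : c = 0 := by nlinarith
  have hxl0 : x l = 0 := by rw [hxl, hc0]; norm_num
  obtain ⟨r', hr'0, hr'x⟩ := Bf_nonneg_of_last_zero hx hxl0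
  rw [hxx] at hr'x
  have : (-1 : ℝ) = r' := by exact_mod_cast hr'x
  linarith

lemma spanC_of_spanR {U : Submodule ℂ (Cn n)} (hU : conjSub U = U) (b : Fin 4 → Cn n)
    (hb : ∀ i, b i ∈ realPoints U)
    (hspan : Submodule.span ℝ (Set.range b) = realPoints U) :
    Submodule.span ℂ (Set.range b) = U := by
  apply le_antisymm
  · exact Submodule.span_le.mpr (Set.range_subset_iff.mpr fun i => (hb i).1)
  · rw [← spanC_realPoints hU]
    refine Submodule.span_le.mpr fun x hx => ?_
    have hx' : x ∈ Submodule.span ℝ (Set.range b) := hspan ▸ hx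
    have hle : Submodule.span ℝ (Set.range b) ≤
        (Submodule.span ℂ (Set.range b)).restrictScalars ℝ :=
      Submodule.span_le.mpr fun y hy => Submodule.subset_span hy
    exact hle hx'

lemma spanR_coe_basis {P : Submodule ℝ (Cn n)} {m : ℕ} (v : Basis (Fin m) ℝ P) :
    Submodule.span ℝ (Set.range fun i => (v i : Cn n)) = P := by
  have h := congrArg (Submodule.map P.subtype) v.span_eq
  rwa [Submodule.map_span, Submodule.map_top, Submodule.range_subtype,
    ← Set.range_comp] at h

lemma real_parts_zero {z w : ℂ} (hz : starRingEnd ℂ z = z) (hw : starRingEnd ℂ w = w)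
    (h : z + Complex.I * w = 0) : z = 0 ∧ w = 0 := by
  have hz' : (z.re : ℂ) = z := Complex.conj_eq_iff_re.mp hz
  have hw' : (w.re : ℂ) = w := Complex.conj_eq_iff_re.mp hw
  rw [← hz', ← hw'] at h
  have hre := congrArg Complex.re h
  have him := congrArg Complex.im h
  simp only [Complex.add_re, Complex.add_im, Complex.mul_re, Complex.mul_im, Complex.I_re,
    Complex.I_im, Complex.ofReal_re, Complex.ofReal_im, Complex.zero_re, Complex.zero_im,
    zero_mul, one_mul, mul_zero, sub_zero, add_zero, zero_add, zero_sub, neg_zero] at hre him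
  rw [← hz', ← hw']
  constructor <;> norm_num [hre, him]

lemma finrank_realPoints {U : Submodule ℂ (Cn n)} (hU : conjSub U = U) :
    Module.finrank ℝ (realPoints U) = Module.finrank ℂ U := by
  set P := realPoints U with hP
  have hmem : ∀ p : P × P, ((p.1 : Cn n) + Complex.I • (p.2 : Cn n)) ∈ U :=
    fun p => U.add_mem p.1.2.1 (U.smul_mem _ p.2.2.1)
  let f : P × P →ₗ[ℝ] (U.restrictScalars ℝ) :=
    { toFun := fun p => ⟨(p.1 : Cn n) + Complex.I • (p.2 : Cn n), hmem p⟩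
      map_add' := by
        intro p q
        apply Subtype.ext
        simp only [Submodule.coe_add, Prod.fst_add, Prod.snd_add, smul_add]
        module
      map_smul' := by
        intro r p
        apply Subtype.ext
        simp only [SetLike.val_smul, Prod.smul_fst, Prod.smul_snd, RingHom.id_apply,
          smul_add]
        rw [smul_comm]
    }
  have hfb : Function.Bijective f := by
    constructor
    · intro p q hpq
      have h0 : (((p.1 : Cn n) - (q.1 : Cn n)) : Cn n)
          + Complex.I • (((p.2 : Cn n) - (q.2 : Cn n)) : Cn n) = 0 := by
        have h := congrArg (fun x : (U.restrictScalars ℝ) => (x : Cn n)) hpq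
        simp only [f, LinearMap.coe_mk, AddHom.coe_mk] at h
        rw [smul_sub]
        linear_combination (norm := module) h
      have hz : ∀ i, (p.1 : Cn n) i - (q.1 : Cn n) i = 0 ∧
          (p.2 : Cn n) i - (q.2 : Cn n) i = 0 := by
        intro i
        have h1 := congrFun h0 i
        simp only [Pi.add_apply, Pi.sub_apply, Pi.smul_apply, smul_eq_mul] at h1
        exact real_parts_zero (by rw [map_sub, p.1.2.2 i, q.1.2.2 i])
          (by rw [map_sub, p.2.2.2 i, q.2.2.2 i]) h1
      have hp1 : p.1 = q.1 := Subtype.ext (funext fun i => sub_eq_zero.mp (hz i).1)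
      have hp2 : p.2 = q.2 := Subtype.ext (funext fun i => sub_eq_zero.mp (hz i).2)
      exact Prod.ext hp1 hp2
    · rintro ⟨y, hy⟩
      obtain ⟨a, b, ha, hb, hab⟩ := exists_real_decomp hU hy
      exact ⟨(⟨a, ha⟩, ⟨b, hb⟩), Subtype.ext hab.symm⟩
  have h1 := LinearEquiv.finrank_eq (LinearEquiv.ofBijective f hfb)
  rw [Module.finrank_prod] at h1
  have h2 : Module.finrank ℝ (U.restrictScalars ℝ) = Module.finrank ℝ U :=
    LinearEquiv.finrank_eq
      ((Submodule.restrictScalarsEquiv ℝ ℂ (Cn n) U).restrictScalars ℝ)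
  have h3 : Module.finrank ℝ U = 2 * Module.finrank ℂ U := finrank_real_of_complex U
  omega

/-- The central determinant computation. -/
lemma key_det (W : Submodule ℂ (Cn n)) (T : Cn n ≃ₗ[ℂ] Cn n)
    (hT : ∀ v w, Bf n (T v) (T w) = Bf n v w)
    (A : Cn n →ₗ[ℂ] Cn n)
    (hAv : ∀ v, A v = T.symm (conjSL n (T (conjSL n v))))
    (h : ∀ x ∈ W, A x ∈ W)
    (b : Fin 4 → Cn n) (hbW : ∀ i, b i ∈ W) (hbreal : ∀ i, b i ∈ realSub n)
    (hbspan : Submodule.span ℂ (Set.range b) = W)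
    (hbGram : ∀ i j, Bf n (b i) (b j) = gram31 i j)
    (e : Fin 4 → Cn n) (hereal : ∀ i, e i ∈ realSub n)
    (hespan : Submodule.span ℂ (Set.range e) = W.map (T : Cn n →ₗ[ℂ] Cn n))
    (D : Fin 4 → ℝ) (hD : ∀ i, D i = 1 ∨ D i = -1)
    (heGram : ∀ i j, Bf n (e i) (e j) = if i = j then (D i : ℂ) else 0) :
    LinearMap.det (A.restrict h) = -∏ i, (D i : ℂ) := by
  classical
  -- independence of the two families
  have hbind : LinearIndependent ℂ b := by
    refine ortho_indep b (fun i => if (i : ℕ) < 3 then (1 : ℂ) else -1) (fun i => ?_)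
      (fun i j => hbGram i j)
    show (if (i : ℕ) < 3 then (1 : ℂ) else -1) ≠ 0
    split_ifs <;> norm_num
  have heind : LinearIndependent ℂ e := by
    refine ortho_indep e (fun i => (D i : ℂ)) (fun i => ?_) heGram
    show (D i : ℂ) ≠ 0
    rcases hD i with h' | h' <;> rw [h'] <;> norm_num
  -- the family `d := T⁻¹ e` in `W`
  set d : Fin 4 → Cn n := fun i => T.symm (e i) with hd_def
  have heW : ∀ i, e i ∈ W.map (T : Cn n →ₗ[ℂ] Cn n) := fun i =>
    hespan ▸ Submodule.subset_span ⟨i, rfl⟩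
  have hdW : ∀ i, d i ∈ W := by
    intro i
    obtain ⟨y, hy, hTy⟩ := Submodule.mem_map.mp (heW i)
    have : d i = y := by rw [hd_def]; simp [← hTy]
    rwa [this]
  have hTd : ∀ k, T (d k) = e k := fun k => T.apply_symm_apply (e k)
  have hGram_dd : ∀ i j, Bf n (d i) (d j) = if i = j then (D i : ℂ) else 0 := by
    intro i j
    have := hT (d i) (d j)
    rw [hTd, hTd] at this
    rw [← this, heGram]
  have hdind : LinearIndependent ℂ d := by
    refine ortho_indep d (fun i => (D i : ℂ)) (fun i => ?_) hGram_dd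
    show (D i : ℂ) ≠ 0
    rcases hD i with h' | h' <;> rw [h'] <;> norm_num
  have hdspan : Submodule.span ℂ (Set.range d) = W := by
    have hmap := congrArg (Submodule.map (T.symm : Cn n →ₗ[ℂ] Cn n)) hespan
    rw [Submodule.map_span, ← Set.range_comp] at hmap
    have h2 : Submodule.map (T.symm : Cn n →ₗ[ℂ] Cn n)
        (Submodule.map (T : Cn n →ₗ[ℂ] Cn n) W) = W := by
      ext x
      simp only [Submodule.mem_map]
      constructor
      · rintro ⟨y, ⟨z, hz, rfl⟩, rfl⟩
        simpa using hz
      · intro hx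
        exact ⟨T x, ⟨x, hx, rfl⟩, by simp⟩
    rw [h2] at hmap
    exact hmap
  -- bases
  set bW : Basis (Fin 4) ℂ W := basisOfSpan b hbW hbind hbspan with hbW_def
  set dW : Basis (Fin 4) ℂ W := basisOfSpan d hdW hdind hdspan with hdW_def
  have hbW_coe : ∀ i, (bW i : Cn n) = b i := fun i => by
    rw [hbW_def]; exact basisOfSpan_apply b hbW hbind hbspan i
  have hdW_coe : ∀ i, (dW i : Cn n) = d i := fun i => by
    rw [hdW_def]; exact basisOfSpan_apply d hdW hdind hdspan i
  have hrepr_b : ∀ u : W, (u : Cn n) = ∑ k, bW.repr u k • b k := by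
    intro u
    have := congrArg W.subtype (bW.sum_repr u).symm
    simpa only [map_sum, map_smul, Submodule.coe_subtype, hbW_coe] using this
  have hrepr_d : ∀ u : W, (u : Cn n) = ∑ k, dW.repr u k • d k := by
    intro u
    have := congrArg W.subtype (dW.sum_repr u).symm
    simpa only [map_sum, map_smul, Submodule.coe_subtype, hdW_coe] using this
  -- the action of `A` on the basis `b`
  have hA_b : ∀ i, A (b i) = ∑ k, starRingEnd ℂ (dW.repr (bW i) k) • d k := by
    intro i
    have hbd : b i = ∑ k, dW.repr (bW i) k • d k := by
      rw [← hbW_coe i]; exact hrepr_d (bW i)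
    have step1 : T (b i) = ∑ k, dW.repr (bW i) k • e k := by
      rw [hbd, map_sum]
      exact Finset.sum_congr rfl fun k _ => by rw [map_smul, hTd]
    have step2 : conjSL n (T (b i)) = ∑ k, starRingEnd ℂ (dW.repr (bW i) k) • e k := by
      rw [step1, map_sum]
      exact Finset.sum_congr rfl fun k _ => by
        rw [map_smulₛₗ, conjSL_eq_self (hereal k)]
    rw [hAv, conjSL_eq_self (hbreal i), step2, map_sum]
    exact Finset.sum_congr rfl fun k _ => by rw [map_smul]
  -- the matrix of `A.restrict` from `bW` to `dW`
  have hrestrict : ∀ i, (A.restrict h) (bW i) =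
      ∑ k, starRingEnd ℂ (dW.repr (bW i) k) • dW k := by
    intro i
    apply Subtype.ext
    rw [LinearMap.restrict_apply]
    simp only [AddSubmonoidClass.coe_finset_sum, SetLike.val_smul, hdW_coe, hbW_coe]
    exact hA_b i
  have hM1 : LinearMap.toMatrix bW dW (A.restrict h) =
      (dW.toMatrix ⇑bW).map (starRingEnd ℂ) := by
    ext k i
    rw [LinearMap.toMatrix_apply, hrestrict i, Matrix.map_apply, Basis.toMatrix_apply]
    rw [Basis.repr_sum_self]
  -- determinant of `A.restrict` as a ratio
  set g : Matrix (Fin 4) (Fin 4) ℂ := bW.toMatrix ⇑dW with hg_def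
  set z : ℂ := g.det with hz_def
  have hyz : (dW.toMatrix ⇑bW).det * z = 1 := by
    rw [hz_def, hg_def, ← Matrix.det_mul, Basis.toMatrix_mul_toMatrix_flip, Matrix.det_one]
  have hdet : LinearMap.det (A.restrict h) = starRingEnd ℂ ((dW.toMatrix ⇑bW).det) * z := by
    rw [← LinearMap.det_toMatrix dW (A.restrict h)]
    have hcomp : LinearMap.toMatrix dW dW (A.restrict h) =
        LinearMap.toMatrix bW dW (A.restrict h) * LinearMap.toMatrix dW bW LinearMap.id := by
      rw [← LinearMap.toMatrix_comp, LinearMap.comp_id]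
    rw [hcomp, Matrix.det_mul, hM1, ← RingHom.mapMatrix_apply, ← RingHom.map_det,
      LinearMap.toMatrix_id_eq_basis_toMatrix]
  -- Gram matrix relation
  have hd_in_b : ∀ j, d j = ∑ i, g i j • b i := by
    intro j
    rw [← hdW_coe j, hrepr_b (dW j)]
    exact Finset.sum_congr rfl fun i _ => by rw [hg_def, Basis.toMatrix_apply]
  have hGmat : Matrix.diagonal (fun i => (D i : ℂ)) =
      g.transpose * (Matrix.of fun k l => gram31 k l) * g := by
    ext i j
    rw [Matrix.mul_apply]
    have : ∀ l, (g.transpose * Matrix.of fun k l => gram31 k l) i l =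
        ∑ k, g k i * gram31 k l := by
      intro l
      rw [Matrix.mul_apply]
      exact Finset.sum_congr rfl fun k _ => by simp [Matrix.transpose_apply]
    calc Matrix.diagonal (fun i => (D i : ℂ)) i j
        = Bf n (d i) (d j) := by
          rw [hGram_dd i j, Matrix.diagonal_apply]
      _ = ∑ k, ∑ l, g k i * (g l j * gram31 k l) := by
          rw [hd_in_b i, hd_in_b j, Bf_sum_left]
          refine Finset.sum_congr rfl fun k _ => ?_
          rw [Bf_smul_left, Bf_sum_right, Finset.mul_sum]
          refine Finset.sum_congr rfl fun l _ => ?_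
          rw [Bf_smul_right, hbGram]
      _ = ∑ l, (∑ k, g k i * gram31 k l) * g l j := by
          rw [Finset.sum_comm]
          refine Finset.sum_congr rfl fun l _ => ?_
          rw [Finset.sum_mul]
          exact Finset.sum_congr rfl fun k _ => by ring
      _ = ∑ l, (g.transpose * Matrix.of fun k l => gram31 k l) i l * g l j := by
          exact Finset.sum_congr rfl fun l _ => by rw [this l]
  -- determinant consequences
  have hdetG : (Matrix.of fun k l => gram31 k l).det = -1 := by
    have hG : (Matrix.of fun k l => gram31 k l) =
        Matrix.diagonal (fun i : Fin 4 => if (i : ℕ) < 3 then (1 : ℂ) else -1) := by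
      ext i j
      unfold gram31
      by_cases hij : i = j <;> simp [Matrix.diagonal_apply, hij]
    rw [hG, Matrix.det_diagonal, Fin.prod_univ_four]
    norm_num [show ((0 : Fin 4) : ℕ) = 0 from rfl, show ((1 : Fin 4) : ℕ) = 1 from rfl,
      show ((2 : Fin 4) : ℕ) = 2 from rfl, show ((3 : Fin 4) : ℕ) = 3 from rfl]
  have hz2 : z ^ 2 = -∏ i, (D i : ℂ) := by
    have h1 := congrArg Matrix.det hGmat
    rw [Matrix.det_diagonal, Matrix.det_mul, Matrix.det_mul, Matrix.det_transpose,
      hdetG, ← hz_def] at h1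
    linear_combination h1
  have hs2 : (∏ i, (D i : ℂ)) ^ 2 = 1 := by
    rw [← Finset.prod_pow]
    rw [Finset.prod_congr rfl (fun i _ => show ((D i : ℂ)) ^ 2 = 1 by
      rcases hD i with h' | h' <;> rw [h'] <;> norm_num)]
    exact Finset.prod_const_one
  have hzconj : z * starRingEnd ℂ z = 1 := by
    have hconj2 : starRingEnd ℂ (z ^ 2) = z ^ 2 := by
      rw [hz2, map_neg]
      congr 1
      rw [map_prod]
      exact Finset.prod_congr rfl fun i _ => Complex.conj_ofReal _
    have h4 : (z * starRingEnd ℂ z) ^ 2 = 1 := by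
      calc (z * starRingEnd ℂ z) ^ 2 = z ^ 2 * starRingEnd ℂ (z ^ 2) := by
            rw [map_pow]; ring
        _ = z ^ 2 * z ^ 2 := by rw [hconj2]
        _ = (z ^ 2) ^ 2 := by ring
        _ = 1 := by rw [hz2, neg_sq, hs2]
    have h5 : z * starRingEnd ℂ z = (Complex.normSq z : ℂ) := Complex.mul_conj z
    rw [h5] at h4 ⊢
    norm_cast at h4 ⊢
    nlinarith [Complex.normSq_nonneg z]
  have hy : (dW.toMatrix ⇑bW).det = z⁻¹ := eq_inv_of_mul_eq_one_left hyz
  have hz0 : z ≠ 0 := by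
    intro h0
    rw [h0, mul_zero] at hyz
    exact one_ne_zero hyz.symm
  have hconjz : starRingEnd ℂ z = z⁻¹ := eq_inv_of_mul_eq_one_left (by
    rw [mul_comm]; exact hzconj)
  rw [hdet, hy, map_inv₀, hconjz, inv_inv, ← pow_two, hz2]

end Aux

/-- Let `W ⊆ ℂ^{n+2}` be a 4-dimensional conjugation-stable complex
subspace on which `B` is nondegenerate and whose real points have signature `(3,1)`,
and let `T ∈ O(ℂ^{n+2})` be such that `TW` is conjugation stable.  Then `T⁻¹ ∘ T̄` is a
`ℂ`-linear automorphism of `ℂ^{n+2}` mapping `W` to itself, and the real points of `TW`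
have signature `(3,1)` if and only if `det ((T⁻¹ ∘ T̄)|_W) = 1`. -/
theorem statement1 (n : ℕ) (hn : 2 ≤ n) (W : Submodule ℂ (Cn n))
    (hdim : Module.finrank ℂ W = 4)
    (hconj : conjSub W = W)
    (hnd : ∀ v ∈ W, (∀ w ∈ W, Bf n v w = 0) → v = 0)
    (hsig : hasSig31 n (realPoints W))
    (T : Cn n ≃ₗ[ℂ] Cn n)
    (hT : ∀ v w, Bf n (T v) (T w) = Bf n v w)
    (hconjTW : conjSub (W.map (T : Cn n →ₗ[ℂ] Cn n)) = W.map (T : Cn n →ₗ[ℂ] Cn n))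
    (A : Cn n →ₗ[ℂ] Cn n)
    (hA : A = (T.symm : Cn n →ₗ[ℂ] Cn n).comp (barMap (T : Cn n →ₗ[ℂ] Cn n))) :
    Function.Bijective A ∧ Submodule.map A W = W ∧
      ∀ h : ∀ x ∈ W, A x ∈ W,
        (hasSig31 n (realPoints (W.map (T : Cn n →ₗ[ℂ] Cn n))) ↔
          LinearMap.det (A.restrict h) = 1) := by
  classical
  have hAv : ∀ v, A v = T.symm (conjSL n (T (conjSL n v))) := by
    intro v; rw [hA]; rfl
  set A' : Cn n → Cn n := fun v => conjSL n (T.symm (conjSL n (T v))) with hA'_def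
  have hAA' : ∀ v, A (A' v) = v := by
    intro v
    rw [hAv]
    simp [hA'_def]
  have hA'A : ∀ v, A' (A v) = v := by
    intro v
    rw [hAv]
    simp [hA'_def]
  have hbij : Function.Bijective A :=
    Function.bijective_iff_has_inverse.mpr ⟨A', hA'A, hAA'⟩
  have hWc : ∀ x ∈ W, conjSL n x ∈ W := fun x hx => conj_mem_of_conjSub_eq hconj hx
  have hUc : ∀ x ∈ W.map (T : Cn n →ₗ[ℂ] Cn n), conjSL n x ∈ W.map (T : Cn n →ₗ[ℂ] Cn n) :=
    fun x hx => conj_mem_of_conjSub_eq hconjTW hx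
  have hmapA : ∀ x ∈ W, A x ∈ W := by
    intro x hx
    have h1 : T (conjSL n x) ∈ W.map (T : Cn n →ₗ[ℂ] Cn n) := ⟨conjSL n x, hWc x hx, rfl⟩
    obtain ⟨y, hy, hTy⟩ := hUc _ h1
    rw [hAv, ← hTy]
    simpa using hy
  have hmapA' : ∀ x ∈ W, A' x ∈ W := by
    intro x hx
    have h1 : T x ∈ W.map (T : Cn n →ₗ[ℂ] Cn n) := ⟨x, hx, rfl⟩
    obtain ⟨y, hy, hTy⟩ := hUc _ h1
    have h2 : A' x = conjSL n y := by
      rw [hA'_def]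
      simp only []
      rw [← hTy]
      simp
    rw [h2]
    exact hWc y hy
  have hmap : Submodule.map A W = W := by
    apply le_antisymm
    · rintro x ⟨y, hy, rfl⟩
      exact hmapA y hy
    · intro x hx
      exact ⟨A' x, hmapA' x hx, hAA' x⟩
  refine ⟨hbij, hmap, ?_⟩
  intro h
  obtain ⟨b, hbP, hbspanR, hbGram⟩ := hsig
  have hbspan : Submodule.span ℂ (Set.range b) = W := spanC_of_spanR hconj b hbP hbspanR
  have hUdim : Module.finrank ℂ (W.map (T : Cn n →ₗ[ℂ] Cn n)) = 4 := by
    rw [LinearEquiv.finrank_map_eq, hdim]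
  have hndU : ∀ x ∈ W.map (T : Cn n →ₗ[ℂ] Cn n),
      (∀ y ∈ W.map (T : Cn n →ₗ[ℂ] Cn n), Bf n x y = 0) → x = 0 := by
    intro x hxU hperp
    obtain ⟨x0, hx0, rfl⟩ := hxU
    have hx0perp : ∀ y0 ∈ W, Bf n x0 y0 = 0 := by
      intro y0 hy0
      have h1 := hperp ((T : Cn n →ₗ[ℂ] Cn n) y0) ⟨y0, hy0, rfl⟩
      rwa [show ((T : Cn n →ₗ[ℂ] Cn n) x0) = T x0 from rfl,
        show ((T : Cn n →ₗ[ℂ] Cn n) y0) = T y0 from rfl, hT x0 y0] at h1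
    have h0 := hnd x0 hx0 hx0perp
    rw [h0]
    simp
  constructor
  · -- signature (3,1) implies determinant one
    rintro ⟨e, heP, hespanR, heGram⟩
    have hespan : Submodule.span ℂ (Set.range e) = W.map (T : Cn n →ₗ[ℂ] Cn n) :=
      spanC_of_spanR hconjTW e heP hespanR
    have hdet := key_det W T hT A hAv h b (fun i => (hbP i).1) (fun i => (hbP i).2)
      hbspan hbGram e (fun i => (heP i).2) hespan
      (fun i => if (i : ℕ) < 3 then (1 : ℝ) else -1)
      (fun i => by split_ifs <;> norm_num)
      (fun i j => by
        rw [heGram i j]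
        unfold gram31
        by_cases hij : i = j
        · rw [if_pos hij, if_pos hij]
          split_ifs <;> norm_num
        · rw [if_neg hij, if_neg hij])
    rw [hdet, Fin.prod_univ_four]
    norm_num [show ((0 : Fin 4) : ℕ) = 0 from rfl, show ((1 : Fin 4) : ℕ) = 1 from rfl,
      show ((2 : Fin 4) : ℕ) = 2 from rfl, show ((3 : Fin 4) : ℕ) = 3 from rfl]
  · -- determinant one implies signature (3,1)
    intro hdet1
    have hPdim : Module.finrank ℝ (realPoints (W.map (T : Cn n →ₗ[ℂ] Cn n))) = 4 := by
      rw [finrank_realPoints hconjTW, hUdim]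
    haveI : Invertible (2 : ℝ) := invertibleOfNonzero (by norm_num)
    let β : LinearMap.BilinForm ℝ (realPoints (W.map (T : Cn n →ₗ[ℂ] Cn n))) :=
      LinearMap.mk₂ ℝ (fun x y => (Bf n x y).re)
        (fun x x' y => by
          simp only [Submodule.coe_add]
          rw [Bf_add_left, Complex.add_re])
        (fun r x y => by
          simp only [SetLike.val_smul, smul_eq_mul]
          rw [realSmul_eq, Bf_smul_left]
          simp [Complex.mul_re])
        (fun x y y' => by
          simp only [Submodule.coe_add]
          rw [Bf_add_right, Complex.add_re])
        (fun r x y => by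
          simp only [SetLike.val_smul, smul_eq_mul]
          rw [realSmul_eq, Bf_smul_right]
          simp [Complex.mul_re])
    have hβ_apply : ∀ x y, β x y = (Bf n x y).re := fun x y => rfl
    have hβsymm : β.IsSymm := by
      refine LinearMap.BilinForm.isSymm_def.2 ?_
      intro x y
      simp only [RingHom.id_apply, hβ_apply]
      rw [Bf_comm]
    obtain ⟨v0, hv0⟩ := LinearMap.BilinForm.exists_orthogonal_basis (LinearMap.BilinForm.isSymm_iff.1 hβsymm)
    set v : Basis (Fin 4) ℝ (realPoints (W.map (T : Cn n →ₗ[ℂ] Cn n))) :=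
      v0.reindex (finCongr hPdim) with hv_def
    have hv_real : ∀ i, (v i : Cn n) ∈ realSub n := fun i => (v i).2.2
    have hv_U : ∀ i, (v i : Cn n) ∈ W.map (T : Cn n →ₗ[ℂ] Cn n) := fun i => (v i).2.1
    have hv_ortho : ∀ i j, i ≠ j → Bf n (v i : Cn n) (v j : Cn n) = 0 := by
      intro i j hij
      have h1 : β (v i) (v j) = 0 := by
        rw [hv_def]
        simp only [Module.Basis.reindex_apply]
        exact hv0 (fun hh => hij (Equiv.injective _ hh))
      rw [← Bf_real_entries (hv_real i) (hv_real j), show (Bf n (v i : Cn n) (v j : Cn n)).re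
        = β (v i) (v j) from rfl, h1]
      norm_num
    set c : Fin 4 → ℝ := fun i => (Bf n (v i : Cn n) (v i : Cn n)).re with hc_def
    have hc_diag : ∀ i, Bf n (v i : Cn n) (v i : Cn n) = (c i : ℂ) := fun i =>
      (Bf_real_entries (hv_real i) (hv_real i)).symm
    have hc_ne : ∀ i, c i ≠ 0 := by
      intro i hc0
      have hPy : ∀ w : realPoints (W.map (T : Cn n →ₗ[ℂ] Cn n)),
          Bf n (v i : Cn n) (w : Cn n) = 0 := by
        intro w
        have hw : (w : Cn n) = ∑ k, (v.repr w k : ℝ) • (v k : Cn n) := by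
          have hh := congrArg (realPoints (W.map (T : Cn n →ₗ[ℂ] Cn n))).subtype
            (v.sum_repr w).symm
          simpa only [map_sum, map_smul, Submodule.coe_subtype] using hh
        rw [hw, Bf_sum_right]
        refine Finset.sum_eq_zero fun k _ => ?_
        rw [realSmul_eq, Bf_smul_right]
        rcases eq_or_ne i k with rfl | hik
        · rw [hc_diag, hc0]
          simp
        · rw [hv_ortho i k hik, mul_zero]
      have hperp : ∀ y ∈ W.map (T : Cn n →ₗ[ℂ] Cn n), Bf n (v i : Cn n) y = 0 := by
        intro y hy
        obtain ⟨a, b2, ha, hb2, rfl⟩ := exists_real_decomp hconjTW hy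
        rw [Bf_add_right, Bf_smul_right, hPy ⟨a, ha⟩, hPy ⟨b2, hb2⟩]
        simp
      have h0 := hndU (v i : Cn n) (hv_U i) hperp
      exact v.ne_zero i (Subtype.ext h0)
    set e : Fin 4 → Cn n := fun i => (Real.sqrt |c i|)⁻¹ • (v i : Cn n) with he_def
    set D : Fin 4 → ℝ := fun i => if 0 < c i then 1 else -1 with hD_def
    have hsqrt_pos : ∀ i, 0 < Real.sqrt |c i| := fun i =>
      Real.sqrt_pos.mpr (abs_pos.mpr (hc_ne i))
    have heP : ∀ i, e i ∈ realPoints (W.map (T : Cn n →ₗ[ℂ] Cn n)) := fun i =>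
      Submodule.smul_mem _ _ (v i).2
    have hereal : ∀ i, e i ∈ realSub n := fun i => (heP i).2
    have heGram : ∀ i j, Bf n (e i) (e j) = if i = j then (D i : ℂ) else 0 := by
      intro i j
      rw [he_def]
      simp only []
      rw [realSmul_eq, realSmul_eq, Bf_smul_left, Bf_smul_right]
      rcases eq_or_ne i j with rfl | hij
      · rw [if_pos rfl, hc_diag]
        have hs0 : Real.sqrt |c i| ≠ 0 := (hsqrt_pos i).ne'
        have hss : Real.sqrt |c i| * Real.sqrt |c i| = |c i| :=
          Real.mul_self_sqrt (abs_nonneg (c i))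
        have key : (Real.sqrt |c i|)⁻¹ * ((Real.sqrt |c i|)⁻¹ * c i) = D i := by
          rw [hD_def]
          simp only []
          have h1 : (Real.sqrt |c i|)⁻¹ * ((Real.sqrt |c i|)⁻¹ * c i) = |c i|⁻¹ * c i := by
            rw [← mul_assoc, ← mul_inv, hss]
          rw [h1]
          by_cases hcpos : 0 < c i
          · rw [if_pos hcpos, abs_of_pos hcpos, inv_mul_cancel₀ (hc_ne i)]
          · rw [if_neg hcpos, abs_of_neg (lt_of_le_of_ne (not_lt.mp hcpos) (hc_ne i)),
              inv_neg, neg_mul, inv_mul_cancel₀ (hc_ne i)]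
        rw [← key]
        push_cast
        ring
      · rw [if_neg hij, hv_ortho i j hij, mul_zero, mul_zero]
    have hspanR_e : Submodule.span ℝ (Set.range e) =
        realPoints (W.map (T : Cn n →ₗ[ℂ] Cn n)) := by
      apply le_antisymm
      · exact Submodule.span_le.mpr (Set.range_subset_iff.mpr heP)
      · rw [← spanR_coe_basis v]
        refine Submodule.span_le.mpr ?_
        rintro x ⟨i, rfl⟩
        show (v i : Cn n) ∈ Submodule.span ℝ (Set.range e)
        have hvi : (v i : Cn n) = Real.sqrt |c i| • e i := by
          rw [he_def]
          simp only []
          rw [smul_smul, mul_inv_cancel₀ (hsqrt_pos i).ne', one_smul]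
        rw [hvi]
        exact Submodule.smul_mem _ _ (Submodule.subset_span ⟨i, rfl⟩)
    have hespan : Submodule.span ℂ (Set.range e) = W.map (T : Cn n →ₗ[ℂ] Cn n) :=
      spanC_of_spanR hconjTW e heP hspanR_e
    have hDval : ∀ i, D i = 1 ∨ D i = -1 := fun i => by
      rw [hD_def]; simp only []; split_ifs <;> simp
    have hkey := key_det W T hT A hAv h b (fun i => (hbP i).1) (fun i => (hbP i).2)
      hbspan hbGram e hereal hespan D hDval heGram
    rw [hdet1] at hkey
    have hprod : ∏ i, D i = -1 := by
      have h2 : ((∏ i, D i : ℝ) : ℂ) = -1 := by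
        rw [Complex.ofReal_prod]
        push_cast
        linear_combination hkey
      exact_mod_cast h2
    have hex : ∃ i₀, D i₀ = -1 := by
      by_contra hno
      push_neg at hno
      have hall : ∀ i, D i = 1 := fun i => (hDval i).resolve_right (hno i)
      rw [Finset.prod_congr rfl (fun i _ => hall i), Finset.prod_const_one] at hprod
      norm_num at hprod
    obtain ⟨i₀, hi₀⟩ := hex
    have huniq : ∀ j, j ≠ i₀ → D j = 1 := by
      intro j hj
      rcases hDval j with h1 | h1
      · exact h1
      · exfalso
        refine neg_neg_ortho_false (hereal i₀) (hereal j) ?_ ?_ ?_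
        · rw [heGram i₀ i₀, if_pos rfl, hi₀]; norm_num
        · rw [heGram j j, if_pos rfl, h1]; norm_num
        · rw [heGram i₀ j, if_neg (fun hh => hj hh.symm)]
    set π : Equiv.Perm (Fin 4) := Equiv.swap i₀ 3 with hπ
    have hD3 : ∀ k, D (π k) = if k = (3 : Fin 4) then -1 else 1 := by
      intro k
      by_cases hk : k = (3 : Fin 4)
      · rw [if_pos hk, hk, hπ, Equiv.swap_apply_right]
        exact hi₀
      · rw [if_neg hk]
        apply huniq
        intro hcon
        exact hk (π.injective (by rw [hcon, hπ, Equiv.swap_apply_right]))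
    refine ⟨fun j => e (π j), fun j => heP (π j), ?_, ?_⟩
    · rw [show (fun j => e (π j)) = e ∘ π from rfl, Set.range_comp,
        Equiv.range_eq_univ, Set.image_univ]
      exact hspanR_e
    · intro i j
      rw [heGram (π i) (π j)]
      unfold gram31
      by_cases hij : i = j
      · rw [if_pos (by rw [hij]), if_pos hij]
        subst hij
        rw [hD3 i]
        by_cases hi3 : i = (3 : Fin 4)
        · rw [if_pos hi3, hi3]
          norm_num [show ((3 : Fin 4) : ℕ) = 3 from rfl]
        · rw [if_neg hi3]
          have hlt : (i : ℕ) < 3 := by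
            have h4 := i.isLt
            have hne : (i : ℕ) ≠ 3 := fun hh =>
              hi3 (Fin.ext (by rw [hh]; rfl))
            omega
          rw [if_pos hlt]
          norm_num
      · rw [if_neg (fun hh => hij (π.injective hh)), if_neg hij]

end
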